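/- arXiv:2505.02295 — 2 statements merged into one kernel-verified Lean document; each statement's English description precedes it below -/
import Mathlib

section
/- Let f₀: ℝ → ℝ be continuously differentiable with v ↦ v·f₀'(v) integrable and v·f₀'(v) ≤ 0 for all v (i.e., f₀ is nonincreasing in |v|). Let c₀ > 0, κ ≥ 0, ρ₀ > 0, α₀ > 0. Then there is no complex number σ with Im σ > 0 satisfying the dispersion relation 1 - c₀²/σ² - (κρ₀c₀²/α₀)·(1/σ)·∫ℝ (v·f₀'(v))/(v−σ) dv = 0. -/
open MeasureTheory Complex

/-- Spectral stability of the linearized thick spray system for distributions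
monotone in `|v|`: no root of the dispersion relation in the upper half plane. -/
theorem stmt_0 (f₀ : ℝ → ℝ) (hf : ContDiff ℝ 1 f₀)
    (hint : Integrable (fun v : ℝ => v * deriv f₀ v))
    (hmono : ∀ v : ℝ, v * deriv f₀ v ≤ 0)
    (c₀ κ ρ₀ α₀ : ℝ) (hc₀ : 0 < c₀) (hκ : 0 ≤ κ) (hρ₀ : 0 < ρ₀) (hα₀ : 0 < α₀) :
    ¬ ∃ σ : ℂ, 0 < σ.im ∧
      1 - (c₀ : ℂ)^2 / σ^2 -
        ((κ * ρ₀ * c₀^2 / α₀ : ℝ) : ℂ) * (1 / σ) *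
          ∫ v : ℝ, ((v * deriv f₀ v : ℝ) : ℂ) / ((v : ℂ) - σ) = 0 := by
  rintro ⟨σ, hb, heq⟩
  set K : ℝ := κ * ρ₀ * c₀^2 / α₀ with hK
  have hKnn : 0 ≤ K := by positivity
  have hσ : σ ≠ 0 := by
    intro h; rw [h] at hb; simp at hb
  set I : ℂ := ∫ v : ℝ, ((v * deriv f₀ v : ℝ) : ℂ) / ((v : ℂ) - σ) with hI
  -- multiply the dispersion relation by σ
  have key : σ - (c₀ : ℂ)^2 / σ - (K : ℂ) * I = 0 := by
    have h0 : σ - (c₀ : ℂ)^2 / σ - (K : ℂ) * I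
        = (1 - (c₀ : ℂ)^2 / σ^2 - (K : ℂ) * (1 / σ) * I) * σ := by
      field_simp
    rw [h0, heq, zero_mul]
  -- denominators never vanish
  have hden : ∀ v : ℝ, ((v : ℂ) - σ) ≠ 0 := by
    intro v h
    have := congrArg Complex.im h
    simp at this
    linarith
  -- integrability of the complex integrand
  have hInt : Integrable (fun v : ℝ => ((v * deriv f₀ v : ℝ) : ℂ) / ((v : ℂ) - σ)) := by
    simp only [div_eq_mul_inv]
    have hb' : ∀ v : ℝ, ‖((v : ℂ) - σ)⁻¹‖ ≤ σ.im⁻¹ := by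
      intro v
      rw [norm_inv]
      have h1 : σ.im ≤ ‖(v : ℂ) - σ‖ := by
        have := Complex.abs_im_le_norm ((v : ℂ) - σ)
        simp only [Complex.sub_im, Complex.ofReal_im, zero_sub, abs_neg] at this
        calc σ.im ≤ |σ.im| := le_abs_self _
          _ ≤ ‖(v : ℂ) - σ‖ := this
      exact inv_anti₀ hb h1
    have hmeas : AEStronglyMeasurable (fun v : ℝ => ((v : ℂ) - σ)⁻¹) volume :=
      ((Complex.continuous_ofReal.sub continuous_const).inv₀ hden).aestronglyMeasurable
    have := (hint.ofReal).bdd_mul hmeas (c := σ.im⁻¹) (Filter.Eventually.of_forall hb')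
    exact this.congr (by filter_upwards with v using mul_comm _ _)
  -- the imaginary part of the integral is nonpositive
  have hIim : I.im ≤ 0 := by
    have hcomm := Complex.imCLM.integral_comp_comm hInt
    simp only [Complex.imCLM_apply] at hcomm
    rw [hI, ← hcomm]
    apply integral_nonpos
    intro v
    simp only [div_eq_mul_inv, Complex.mul_im, Complex.ofReal_re, Complex.ofReal_im,
      zero_mul, add_zero]
    apply mul_nonpos_of_nonpos_of_nonneg (hmono v)
    rw [Complex.inv_im]
    simp only [Complex.sub_im, Complex.ofReal_im, zero_sub, neg_neg]
    exact div_nonneg hb.le (Complex.normSq_nonneg _)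
  -- take imaginary parts of key
  have h3 := congrArg Complex.im key
  have hnsq : 0 < Complex.normSq σ := Complex.normSq_pos.mpr hσ
  have h4 : ((c₀ : ℂ)^2 / σ).im = c₀^2 * (-σ.im / Complex.normSq σ) := by
    rw [div_eq_mul_inv, ← Complex.ofReal_pow, Complex.im_ofReal_mul, Complex.inv_im]
  have h5 : ((K : ℂ) * I).im = K * I.im := by
    simp [Complex.mul_im]
  simp only [Complex.sub_im, Complex.zero_im, h4, h5] at h3
  have hpos : 0 < c₀^2 * (σ.im / Complex.normSq σ) := by positivity
  have hneg : c₀^2 * (-σ.im / Complex.normSq σ) = -(c₀^2 * (σ.im / Complex.normSq σ)) := by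
    ring
  have hKI : K * I.im ≤ 0 := mul_nonpos_of_nonneg_of_nonpos hKnn hIim
  linarith
end

section
/- (Scalar Landau damping sign at small coupling.) Let λ₀ ∈ ℝ \ {0}, f₀ C¹ with compact support, holomorphic density allowing continuation, and let D(ω, κ) = ω − λ₀ + κ·H(ω), where H is holomorphic near ω = λ₀ with Im H(λ₀) = π λ₀ f₀'(λ₀) (the Plemelj extension of ∫ v f₀'(v)/(v−ω) dv at ω = λ₀). Then there exist ε > 0 and a C¹ map ω: (−ε, ε) → ℂ with ω(0) = λ₀, D(ω(κ), κ) = 0, and (d/dκ)Im ω(κ)|_{κ=0} = −π λ₀ f₀'(λ₀). In particular, for κ > 0 small, Im ω(κ) < 0 if λ₀ f₀'(λ₀) > 0 and Im ω(κ) > 0 if λ₀ f₀'(λ₀) < 0. -/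
set_option maxHeartbeats 1000000

open Complex Filter

private theorem neg_side {f : ℝ → ℝ} {d : ℝ} (hd : HasDerivAt f d 0) (h0 : f 0 = 0)
    (hneg : d < 0) : ∀ᶠ κ : ℝ in nhdsWithin 0 (Set.Ioi 0), f κ < 0 := by
  have ts : Tendsto (slope f 0) (nhdsWithin 0 {0}ᶜ) (nhds d) :=
    hasDerivAt_iff_tendsto_slope.mp hd
  have hev : ∀ᶠ κ in nhdsWithin 0 {0}ᶜ, slope f 0 κ < 0 := ts.eventually (Iio_mem_nhds hneg)
  have hsub : nhdsWithin (0:ℝ) (Set.Ioi 0) ≤ nhdsWithin 0 {0}ᶜ :=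
    nhdsWithin_mono 0 (fun x hx => ne_of_gt hx)
  filter_upwards [hev.filter_mono hsub, self_mem_nhdsWithin] with κ hs hκ
  have : f κ / κ < 0 := by simpa [slope_def_field, h0] using hs
  rcases div_neg_iff.mp this with ⟨h1, h2⟩ | ⟨h1, h2⟩
  · exact absurd h2 (not_lt.mpr (le_of_lt hκ))
  · exact h1

/-- Scalar Landau damping sign at small coupling: perturbation of the root
`ω = λ₀` of `D(ω,κ) = ω - λ₀ + κ H(ω)` and the sign of its imaginary part. -/
theorem stmt_15 (lam₀ : ℝ) (hlam₀ : lam₀ ≠ 0)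
    (f₀ : ℝ → ℝ) (hf₀ : ContDiff ℝ 1 f₀) (hsupp : HasCompactSupport f₀)
    (H : ℂ → ℂ) (hH : AnalyticAt ℂ H (lam₀ : ℂ))
    (hHim : (H (lam₀ : ℂ)).im = Real.pi * lam₀ * deriv f₀ lam₀) :
    ∃ ε : ℝ, 0 < ε ∧ ∃ ω : ℝ → ℂ,
      ContDiffOn ℝ 1 ω (Set.Ioo (-ε) ε) ∧
      ω 0 = (lam₀ : ℂ) ∧
      (∀ κ ∈ Set.Ioo (-ε) ε, ω κ - (lam₀ : ℂ) + (κ : ℂ) * H (ω κ) = 0) ∧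
      HasDerivAt (fun κ : ℝ => (ω κ).im) (-(Real.pi * lam₀ * deriv f₀ lam₀)) 0 ∧
      (0 < lam₀ * deriv f₀ lam₀ →
        ∀ᶠ κ : ℝ in nhdsWithin 0 (Set.Ioi 0), (ω κ).im < 0) ∧
      (lam₀ * deriv f₀ lam₀ < 0 →
        ∀ᶠ κ : ℝ in nhdsWithin 0 (Set.Ioi 0), 0 < (ω κ).im) := by
  set c : ℂ := H lam₀ with hc
  let B : ℝ × ℂ →L[ℝ] ℝ × ℂ :=
    (ContinuousLinearMap.fst ℝ ℝ ℂ).prod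
      (ContinuousLinearMap.snd ℝ ℝ ℂ + (ContinuousLinearMap.fst ℝ ℝ ℂ).smulRight c)
  let B' : ℝ × ℂ →L[ℝ] ℝ × ℂ :=
    (ContinuousLinearMap.fst ℝ ℝ ℂ).prod
      (ContinuousLinearMap.snd ℝ ℝ ℂ - (ContinuousLinearMap.fst ℝ ℝ ℂ).smulRight c)
  let A : (ℝ × ℂ) ≃L[ℝ] (ℝ × ℂ) := ContinuousLinearEquiv.equivOfInverse B B'
    (fun p => by simp [B, B']) (fun p => by simp [B, B'])
  set Φ : ℝ × ℂ → ℝ × ℂ := fun p => (p.1, p.2 - (lam₀ : ℂ) + p.1 • H p.2) with hΦdef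
  have hA : ∀ p : ℝ × ℂ, A.symm p = (p.1, p.2 - p.1 • c) := by
    intro p
    simp [A, B']
  have hHc : ContDiffAt ℝ 1 H (lam₀ : ℂ) := (hH.contDiffAt).restrict_scalars ℝ
  have hΦc : ContDiffAt ℝ 1 Φ ((0 : ℝ), (lam₀ : ℂ)) := by
    apply ContDiffAt.prodMk contDiffAt_fst
    exact (contDiffAt_snd.sub contDiffAt_const).add
      (contDiffAt_fst.smul (hHc.comp ((0 : ℝ), (lam₀ : ℂ)) contDiffAt_snd))
  have hHd : HasStrictFDerivAt H (fderiv ℝ H (lam₀:ℂ)) (lam₀:ℂ) :=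
    hHc.hasStrictFDerivAt one_ne_zero
  have hs : HasStrictFDerivAt Φ (A : ℝ × ℂ →L[ℝ] ℝ × ℂ) ((0:ℝ), (lam₀:ℂ)) := by
    have h1 : HasStrictFDerivAt (fun p : ℝ × ℂ => p.1 • H p.2)
        ((0:ℝ) • ((fderiv ℝ H (lam₀:ℂ)).comp (ContinuousLinearMap.snd ℝ ℝ ℂ)) +
          (ContinuousLinearMap.fst ℝ ℝ ℂ).smulRight c) ((0:ℝ), (lam₀:ℂ)) :=
      by have := HasStrictFDerivAt.smul (hasStrictFDerivAt_fst (𝕜 := ℝ) (p := ((0:ℝ), (lam₀:ℂ)))) (hHd.comp ((0 : ℝ), (lam₀ : ℂ)) (hasStrictFDerivAt_snd (𝕜 := ℝ) (p := ((0:ℝ), (lam₀:ℂ))))); exact this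
    have h2 : HasStrictFDerivAt Φ ((ContinuousLinearMap.fst ℝ ℝ ℂ).prod (ContinuousLinearMap.snd ℝ ℝ ℂ +
        ((0:ℝ) • ((fderiv ℝ H (lam₀:ℂ)).comp (ContinuousLinearMap.snd ℝ ℝ ℂ)) +
          (ContinuousLinearMap.fst ℝ ℝ ℂ).smulRight c))) ((0:ℝ), (lam₀:ℂ)) := by
      have := HasStrictFDerivAt.prodMk (hasStrictFDerivAt_fst (𝕜 := ℝ) (p := ((0:ℝ), (lam₀:ℂ))))
        (HasStrictFDerivAt.add (HasStrictFDerivAt.sub_const (lam₀:ℂ) (hasStrictFDerivAt_snd (𝕜 := ℝ) (p := ((0:ℝ), (lam₀:ℂ))))) h1)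
      exact this
    convert h2 using 1
    ext p <;> simp [A, B]
  have hΦ00 : Φ ((0:ℝ), (lam₀:ℂ)) = ((0:ℝ), (0:ℂ)) := by simp [Φ]
  set g : ℝ × ℂ → ℝ × ℂ := hs.localInverse Φ A _ with hg
  have hr : ∀ᶠ y in nhds ((0:ℝ), (0:ℂ)), Φ (g y) = y := by
    have := hs.eventually_right_inverse
    rwa [hΦ00] at this
  have hg00 : g ((0:ℝ), (0:ℂ)) = ((0:ℝ), (lam₀:ℂ)) := by
    have := hs.localInverse_apply_image
    rwa [hΦ00] at this
  have hgd : HasStrictFDerivAt g (A.symm : ℝ × ℂ →L[ℝ] ℝ × ℂ) ((0:ℝ), (0:ℂ)) := by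
    have := hs.to_localInverse
    rwa [hΦ00] at this
  have hgc : ContDiffAt ℝ 1 g ((0:ℝ), (0:ℂ)) := by
    have := hΦc.to_localInverse hs.hasFDerivAt one_ne_zero
    rw [hΦ00] at this
    exact this
  set ω : ℝ → ℂ := fun κ => (g (κ, 0)).2 with hω
  have hj : ContDiffAt ℝ 1 (fun κ : ℝ => ((κ, 0) : ℝ × ℂ)) 0 :=
    contDiffAt_id.prodMk contDiffAt_const
  have hωc : ContDiffAt ℝ 1 ω 0 := by
    have h1 : ContDiffAt ℝ 1 (g ∘ fun κ : ℝ => ((κ, 0) : ℝ × ℂ)) 0 :=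
      ContDiffAt.comp 0 hgc hj
    exact ContDiffAt.comp 0 contDiffAt_snd h1
  obtain ⟨u, hu, hucd⟩ := hωc.contDiffOn le_rfl (by simp)
  have hcont : Tendsto (fun κ : ℝ => ((κ, 0) : ℝ × ℂ)) (nhds 0) (nhds ((0:ℝ),(0:ℂ))) := by
    exact (continuous_id.prodMk continuous_const).tendsto' 0 ((0:ℝ),(0:ℂ)) rfl
  have hev : ∀ᶠ κ : ℝ in nhds 0, ω κ - (lam₀:ℂ) + (κ:ℂ) * H (ω κ) = 0 := by
    filter_upwards [hcont.eventually hr] with κ h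
    rw [hΦdef] at h
    have h1 : (g (κ, 0)).1 = κ := congrArg Prod.fst h
    have h2 : (g (κ, 0)).2 - (lam₀:ℂ) + (g (κ,0)).1 • H ((g (κ,0)).2) = 0 := congrArg Prod.snd h
    rw [h1] at h2
    simpa [ω, Complex.real_smul] using h2
  have hω0 : ω 0 = (lam₀ : ℂ) := by
    have : ω 0 = (g ((0:ℝ), (0:ℂ))).2 := rfl
    rw [this, hg00]
  have hjf : HasFDerivAt (fun κ : ℝ => ((κ, 0) : ℝ × ℂ)) (ContinuousLinearMap.inl ℝ ℝ ℂ) 0 :=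
    (ContinuousLinearMap.inl ℝ ℝ ℂ).hasFDerivAt
  have hcomp : HasFDerivAt (g ∘ fun κ : ℝ => ((κ, 0) : ℝ × ℂ))
      ((A.symm : ℝ × ℂ →L[ℝ] ℝ × ℂ).comp (ContinuousLinearMap.inl ℝ ℝ ℂ)) 0 :=
    HasFDerivAt.comp 0 hgd.hasFDerivAt hjf
  have hωf : HasFDerivAt ω ((ContinuousLinearMap.snd ℝ ℝ ℂ).comp
      ((A.symm : ℝ × ℂ →L[ℝ] ℝ × ℂ).comp (ContinuousLinearMap.inl ℝ ℝ ℂ))) 0 :=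
    HasFDerivAt.comp 0 (ContinuousLinearMap.snd ℝ ℝ ℂ).hasFDerivAt hcomp
  have hωd : HasDerivAt ω (-c) 0 := by
    have := hωf.hasDerivAt
    simpa [hA] using this
  have himd : HasDerivAt (fun κ : ℝ => (ω κ).im) (-(Real.pi * lam₀ * deriv f₀ lam₀)) 0 := by
    have h1 : HasDerivAt (fun κ : ℝ => Complex.imCLM (ω κ)) (Complex.imCLM (-c)) 0 :=
      Complex.imCLM.hasFDerivAt.comp_hasDerivAt 0 hωd
    have h2 : Complex.imCLM (-c) = -(Real.pi * lam₀ * deriv f₀ lam₀) := by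
      simp only [map_neg, Complex.imCLM_apply, hHim]
    rw [h2] at h1
    exact h1
  -- choose ε
  obtain ⟨s, hs_mem, hs_sub⟩ := eventually_iff_exists_mem.mp hev
  obtain ⟨ε, hε, hball⟩ := Metric.mem_nhds_iff.mp (inter_mem hu hs_mem)
  have hIoo : Set.Ioo (-ε) ε ⊆ u ∩ s := by
    intro x hx
    apply hball
    rw [Real.ball_eq_Ioo]
    simpa using hx
  refine ⟨ε, hε, ω, hucd.mono (fun x hx => (hIoo hx).1), hω0,
    fun κ hκ => hs_sub κ (hIoo hκ).2, himd, ?_, ?_⟩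
  · intro hpos
    apply neg_side himd (by simp [hω0])
    have : 0 < Real.pi * (lam₀ * deriv f₀ lam₀) := mul_pos Real.pi_pos hpos
    nlinarith
  · intro hneg
    have him0 : (fun κ : ℝ => (ω κ).im) 0 = 0 := by simp [hω0]
    have hd' : HasDerivAt (fun κ : ℝ => -((ω κ).im)) (Real.pi * lam₀ * deriv f₀ lam₀) 0 := by
      exact himd.neg.congr_deriv (by ring)
    have : ∀ᶠ κ : ℝ in nhdsWithin 0 (Set.Ioi 0), -((ω κ).im) < 0 := by
      apply neg_side hd' (by simp [hω0])
      have : Real.pi * (lam₀ * deriv f₀ lam₀) < 0 :=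
        mul_neg_of_pos_of_neg Real.pi_pos hneg
      nlinarith
    filter_upwards [this] with κ h
    linarith
end
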